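/- An essentially positive Nevanlinna function that is not identically constant has only real, simple poles and real, simple zeros, and its zeros and poles interlace on the real axis. -/

import Mathlib

open Filter Topology Set Complex

set_option maxHeartbeats 1000000

namespace MeromorphicAt

/-- Compatibility: the meromorphic order at a point. -/
noncomputable def order {f : ℂ → ℂ} {x : ℂ} (_ : MeromorphicAt f x) : WithTop ℤ := meromorphicOrderAt f x

lemma order_eq_top_iff {f : ℂ → ℂ} {x : ℂ} (hf : MeromorphicAt f x) :
    hf.order = ⊤ ↔ ∀ᶠ z in 𝓝[≠] x, f z = 0 := meromorphicOrderAt_eq_top_iff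

lemma order_eq_int_iff {f : ℂ → ℂ} {x : ℂ} (hf : MeromorphicAt f x) {n : ℤ} :
    hf.order = n ↔ ∃ g : ℂ → ℂ, AnalyticAt ℂ g x ∧ g x ≠ 0 ∧
      ∀ᶠ z in 𝓝[≠] x, f z = (z - x) ^ n • g z := meromorphicOrderAt_eq_int_iff hf

end MeromorphicAt

namespace EPN

/-- Points on a ray from `z₀` tend to `z₀` within the punctured neighborhood. -/
lemma ray_tendsto (z₀ e : ℂ) (he : e ≠ 0) :
    Tendsto (fun r : ℝ => z₀ + r * e) (𝓝[>] 0) (𝓝[≠] z₀) := by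
  rw [tendsto_nhdsWithin_iff]
  constructor
  · apply Filter.Tendsto.mono_left _ nhdsWithin_le_nhds
    have h : Continuous fun r : ℝ => z₀ + (r : ℂ) * e := by continuity
    simpa using h.tendsto 0
  · filter_upwards [self_mem_nhdsWithin] with r hr
    simp only [mem_compl_iff, mem_singleton_iff]
    intro h
    have h0 : (r : ℂ) * e = 0 := by linear_combination h
    rcases mul_eq_zero.mp h0 with h' | h'
    · have : r = 0 := by exact_mod_cast h'
      exact (ne_of_gt hr) this
    · exact he h'

/-- Two continuous functions agreeing on a punctured neighborhood agree at the point. -/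
lemma ext_val_eq {G H : ℂ → ℂ} {t : ℂ} (hG : ContinuousAt G t) (hH : ContinuousAt H t)
    (h : ∀ᶠ z in 𝓝[≠] t, G z = H z) : G t = H t := by
  have h1 : Tendsto G (𝓝[≠] t) (𝓝 (G t)) := hG.tendsto.mono_left nhdsWithin_le_nhds
  have h2 : Tendsto H (𝓝[≠] t) (𝓝 (H t)) := hH.tendsto.mono_left nhdsWithin_le_nhds
  exact tendsto_nhds_unique (h2.congr' (EventuallyEq.symm h)) h1 |>.symm


variable {f : ℂ → ℂ}

lemma order_ne_top (hm : MeromorphicOn f univ)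
    (Him : ∀ z : ℂ, z.im ≠ 0 → z.im * (f z).im > 0) (z : ℂ) :
    (hm z (mem_univ z)).order ≠ ⊤ := by
  intro h
  rw [MeromorphicAt.order_eq_top_iff] at h
  by_cases hz : z.im = 0
  · have htd := ray_tendsto z Complex.I Complex.I_ne_zero
    have h2 : ∀ᶠ r : ℝ in 𝓝[>] (0:ℝ), f (z + r * Complex.I) = 0 := htd.eventually h
    obtain ⟨r, hfr, hr⟩ := (h2.and self_mem_nhdsWithin).exists
    have him : (z + r * Complex.I).im = r := by simp [hz]
    have hpos := Him _ (by rw [him]; exact ne_of_gt hr)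
    rw [hfr] at hpos; simp at hpos
  · have h2 : ∀ᶠ w in 𝓝[≠] z, w.im ≠ 0 :=
      (Complex.continuous_im.continuousAt.eventually_ne hz).filter_mono nhdsWithin_le_nhds
    obtain ⟨w, hfw, hw⟩ := (h.and h2).exists
    have hpos := Him w hw
    rw [hfw] at hpos; simp at hpos

lemma dual_mero (hm : MeromorphicOn f univ) : MeromorphicOn (fun w => -(f w)⁻¹) univ :=
  fun z hz => ((hm z hz).inv).neg

lemma dual_Him (Him : ∀ z : ℂ, z.im ≠ 0 → z.im * (f z).im > 0) :
    ∀ z : ℂ, z.im ≠ 0 → z.im * ((fun w => -(f w)⁻¹) z).im > 0 := by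
  intro z hz
  have h := Him z hz
  have hfz : f z ≠ 0 := by
    intro h0; rw [h0] at h; simp at h
  have hn : 0 < Complex.normSq (f z) := Complex.normSq_pos.mpr hfz
  simp only [Complex.neg_im, Complex.inv_im, neg_div, neg_neg]
  rw [← mul_div_assoc]
  exact div_pos h hn

lemma dual_order (hm : MeromorphicOn f univ) {z : ℂ} {n : ℤ}
    (h : (hm z (mem_univ z)).order = n) :
    ((dual_mero hm) z (mem_univ z)).order = (-n : ℤ) := by
  rw [MeromorphicAt.order_eq_int_iff] at h ⊢
  obtain ⟨G, hG, hGne, hGeq⟩ := h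
  refine ⟨fun w => -(G w)⁻¹, (hG.inv hGne).neg, by simpa using hGne, ?_⟩
  filter_upwards [hGeq, self_mem_nhdsWithin] with w hw hwz
  have hwz' : w ≠ z := hwz
  simp only [smul_eq_mul] at hw ⊢
  rw [hw, mul_inv, ← zpow_neg]
  ring


/-- If `f` agrees with a continuous `G` on a punctured neighborhood of a real point,
then `G` is real there. -/
lemma extension_im_eq_zero (Him : ∀ z : ℂ, z.im ≠ 0 → z.im * (f z).im > 0)
    (x : ℝ) {G : ℂ → ℂ} (hG : ContinuousAt G (x:ℂ))
    (heq : ∀ᶠ z in 𝓝[≠] (x:ℂ), f z = G z) : (G x).im = 0 := by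
  have key : ∀ e : ℂ, e ≠ 0 → Tendsto (fun r : ℝ => (G ((x:ℂ) + r * e)).im) (𝓝[>] (0:ℝ))
      (𝓝 ((G x).im)) := by
    intro e he
    have htd := (ray_tendsto (x:ℂ) e he).mono_right nhdsWithin_le_nhds
    have h1 : Tendsto (fun r : ℝ => G ((x:ℂ) + r * e)) (𝓝[>] (0:ℝ)) (𝓝 (G x)) :=
      hG.tendsto.comp htd
    exact (Complex.continuous_im.tendsto _).comp h1
  have hup : 0 ≤ (G x).im := by
    refine ge_of_tendsto (key Complex.I Complex.I_ne_zero) ?_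
    filter_upwards [(ray_tendsto (x:ℂ) Complex.I Complex.I_ne_zero).eventually heq,
      self_mem_nhdsWithin] with r hfr hr
    have him : ((x:ℂ) + r * Complex.I).im = r := by simp
    have hpos := Him _ (by rw [him]; exact ne_of_gt hr)
    rw [him, hfr] at hpos
    have hr' : (0:ℝ) < r := hr
    nlinarith
  have hdown : (G x).im ≤ 0 := by
    have hne : -Complex.I ≠ 0 := by simp [Complex.I_ne_zero]
    refine le_of_tendsto (key (-Complex.I) hne) ?_
    filter_upwards [(ray_tendsto (x:ℂ) (-Complex.I) hne).eventually heq,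
      self_mem_nhdsWithin] with r hfr hr
    have him : ((x:ℂ) + r * (-Complex.I)).im = -r := by simp
    have hpos := Him _ (by rw [him]; simpa using ne_of_gt hr)
    rw [him, hfr] at hpos
    have hr' : (0:ℝ) < r := hr
    nlinarith
  linarith

lemma analyticAt_zpow {c s : ℂ} (h : s ≠ c) (k : ℤ) :
    AnalyticAt ℂ (fun z : ℂ => (z - c) ^ k) s := by
  rcases le_or_gt 0 k with hk | hk
  · lift k to ℕ using hk
    have : AnalyticAt ℂ (fun z : ℂ => (z - c) ^ (k:ℕ)) s :=
      (analyticAt_id.sub analyticAt_const).pow _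
    simpa [zpow_natCast] using this
  · obtain ⟨m, rfl⟩ : ∃ m : ℕ, k = -(m:ℤ) := ⟨(-k).toNat, by omega⟩
    have h1 : AnalyticAt ℂ (fun z : ℂ => ((z - c) ^ (m:ℕ))⁻¹) s :=
      ((analyticAt_id.sub analyticAt_const).pow _).inv
        (pow_ne_zero _ (sub_ne_zero.mpr h))
    have h2 : (fun z : ℂ => (z - c) ^ (-(m:ℤ))) =ᶠ[𝓝 s] fun z => ((z - c) ^ (m:ℕ))⁻¹ := by
      filter_upwards with z
      rw [zpow_neg, zpow_natCast]
    exact h1.congr h2.symm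

/-- Transfer of a punctured-neighborhood identity to nearby points. -/
lemma extension_transfer {g : ℂ → ℂ} {t : ℂ} (heq : ∀ᶠ z in 𝓝[≠] t, f z = g z) :
    ∀ᶠ s : ℂ in 𝓝 t, ∀ᶠ z in 𝓝[≠] s, f z = g z := by
  rw [eventually_nhdsWithin_iff] at heq
  filter_upwards [heq.eventually_nhds] with s hs
  by_cases hst : s = t
  · subst hst
    rw [eventually_nhdsWithin_iff]
    filter_upwards [hs] with z h1 h2
    exact h1 (by simpa using h2)
  · apply Filter.Eventually.filter_mono nhdsWithin_le_nhds
    filter_upwards [hs, eventually_ne_nhds hst] with z h1 h2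
    exact h1 (by simpa using h2)


lemma directional_sign (Him : ∀ z : ℂ, z.im ≠ 0 → z.im * (f z).im > 0)
    (x : ℝ) (n : ℤ) {G : ℂ → ℂ} (hG : ContinuousAt G (x:ℂ))
    (heq : ∀ᶠ z in 𝓝[≠] (x:ℂ), f z = (z - (x:ℂ)) ^ n • G z) (θ : ℝ)
    (hθ : Real.sin θ ≠ 0) :
    0 ≤ Real.sin θ * (Complex.exp (θ * Complex.I) ^ n * G x).im := by
  set e := Complex.exp ((θ:ℂ) * Complex.I) with he_def
  have he : e ≠ 0 := Complex.exp_ne_zero _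
  have htd := ray_tendsto (x:ℂ) e he
  have him : ∀ r : ℝ, ((x:ℂ) + r * e).im = r * Real.sin θ := by
    intro r
    simp [he_def, Complex.exp_ofReal_mul_I_im]
  have hev : ∀ᶠ r : ℝ in 𝓝[>] (0:ℝ),
      0 ≤ Real.sin θ * (e ^ n * G ((x:ℂ) + r * e)).im := by
    filter_upwards [htd.eventually heq, self_mem_nhdsWithin] with r hfr hr
    have hr' : (0:ℝ) < r := hr
    have h1 : ((x:ℂ) + r * e).im ≠ 0 := by
      rw [him]; exact mul_ne_zero (ne_of_gt hr') hθ
    have h2 := Him _ h1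
    have h3 : ((x:ℂ) + r * e - x) = (r:ℂ) * e := by ring
    rw [him, hfr, h3] at h2
    have h4 : (((r:ℂ) * e) ^ n • G ((x:ℂ) + r * e)).im
        = r ^ n * (e ^ n * G ((x:ℂ) + r * e)).im := by
      rw [smul_eq_mul, mul_zpow, ← Complex.ofReal_zpow, mul_assoc, Complex.im_ofReal_mul]
    rw [h4] at h2
    have hrn : (0:ℝ) < r ^ n := zpow_pos hr' n
    set tt := (e ^ n * G ((x:ℂ) + r * e)).im
    have h6 : 0 < (r * r ^ n) * (Real.sin θ * tt) := by nlinarith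
    rcases mul_pos_iff.mp h6 with ⟨_, h7⟩ | ⟨h7, _⟩
    · exact h7.le
    · nlinarith [mul_pos hr' hrn]
  have hlim : Tendsto (fun r : ℝ => Real.sin θ * (e ^ n * G ((x:ℂ) + r * e)).im)
      (𝓝[>] (0:ℝ)) (𝓝 (Real.sin θ * (e ^ n * G x).im)) := by
    have h1 : Tendsto (fun r : ℝ => G ((x:ℂ) + r * e)) (𝓝[>] (0:ℝ)) (𝓝 (G x)) :=
      hG.tendsto.comp (htd.mono_right nhdsWithin_le_nhds)
    have h2 := (Complex.continuous_im.tendsto _).comp (h1.const_mul (e ^ n))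
    exact h2.const_mul _
  exact ge_of_tendsto hlim hev

lemma trig_aux {n : ℤ} (hn : 2 ≤ n) {a : ℝ}
    (H : ∀ θ : ℝ, Real.sin θ ≠ 0 → 0 ≤ Real.sin θ * (a * Real.sin (n * θ))) : a = 0 := by
  have hn' : (2:ℝ) ≤ (n:ℝ) := by exact_mod_cast hn
  have hπ := Real.pi_pos
  have hθ1 : (0:ℝ) < Real.pi / (2 * n) := by positivity
  have hθ1' : Real.pi / (2 * n) < Real.pi := by
    rw [div_lt_iff₀ (by positivity)]; nlinarith
  have hs1 : 0 < Real.sin (Real.pi / (2 * n)) := Real.sin_pos_of_pos_of_lt_pi hθ1 hθ1'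
  have he1 : (n:ℝ) * (Real.pi / (2 * n)) = Real.pi / 2 := by
    field_simp
  have h1 := H (Real.pi / (2 * n)) (ne_of_gt hs1)
  rw [he1, Real.sin_pi_div_two, mul_one] at h1
  have ha1 : 0 ≤ a := by nlinarith
  have hθ2 : (0:ℝ) < 3 * Real.pi / (2 * n) := by positivity
  have hθ2' : 3 * Real.pi / (2 * n) < Real.pi := by
    rw [div_lt_iff₀ (by positivity)]; nlinarith
  have hs2 : 0 < Real.sin (3 * Real.pi / (2 * n)) := Real.sin_pos_of_pos_of_lt_pi hθ2 hθ2'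
  have he2 : (n:ℝ) * (3 * Real.pi / (2 * n)) = Real.pi + Real.pi / 2 := by
    field_simp; ring
  have hsin2 : Real.sin ((n:ℝ) * (3 * Real.pi / (2 * n))) = -1 := by
    rw [he2, Real.sin_add, Real.sin_pi, Real.cos_pi, Real.sin_pi_div_two]; ring
  have h2 := H (3 * Real.pi / (2 * n)) (ne_of_gt hs2)
  rw [hsin2] at h2
  nlinarith

lemma trig_classify {n : ℤ} (hn : n ≠ 0) {a b : ℝ} (hab : ¬(a = 0 ∧ b = 0))
    (H : ∀ θ : ℝ, Real.sin θ ≠ 0 →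
      0 ≤ Real.sin θ * (a * Real.sin (n * θ) + b * Real.cos (n * θ))) :
    b = 0 ∧ ((n = 1 ∧ 0 < a) ∨ (n = -1 ∧ a < 0)) := by
  have hπ := Real.pi_pos
  have hcont : Continuous fun θ : ℝ => a * Real.sin (n * θ) + b * Real.cos (n * θ) := by
    continuity
  have hb0 : b = 0 := by
    have hb1 : 0 ≤ b := by
      have hlim : Tendsto (fun θ : ℝ => a * Real.sin (n * θ) + b * Real.cos (n * θ))
          (𝓝[>] (0:ℝ)) (𝓝 b) := by
        have := hcont.tendsto 0
        simp only [mul_zero, Real.sin_zero, Real.cos_zero, mul_zero, mul_one, zero_add] at this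
        exact this.mono_left nhdsWithin_le_nhds
      refine ge_of_tendsto hlim ?_
      filter_upwards [Ioo_mem_nhdsGT_of_mem (Set.left_mem_Ico.mpr hπ)] with θ hθ
      have hs : 0 < Real.sin θ := Real.sin_pos_of_pos_of_lt_pi hθ.1 hθ.2
      have := H θ (ne_of_gt hs)
      nlinarith
    have hb2 : b ≤ 0 := by
      have hlim : Tendsto (fun θ : ℝ => a * Real.sin (n * θ) + b * Real.cos (n * θ))
          (𝓝[<] (0:ℝ)) (𝓝 b) := by
        have := hcont.tendsto 0
        simp only [mul_zero, Real.sin_zero, Real.cos_zero, mul_zero, mul_one, zero_add] at this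
        exact this.mono_left nhdsWithin_le_nhds
      refine le_of_tendsto hlim ?_
      filter_upwards [Ioo_mem_nhdsLT_of_mem (Set.right_mem_Ioc.mpr (by linarith : -Real.pi < 0))]
        with θ hθ
      have hs : Real.sin θ < 0 := by
        have := Real.sin_pos_of_pos_of_lt_pi (x := -θ) (by linarith [hθ.2]) (by linarith [hθ.1])
        rw [Real.sin_neg] at this; linarith
      have := H θ (ne_of_lt hs)
      nlinarith
    linarith
  subst hb0
  refine ⟨rfl, ?_⟩
  have H' : ∀ θ : ℝ, Real.sin θ ≠ 0 → 0 ≤ Real.sin θ * (a * Real.sin (n * θ)) := by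
    intro θ hθ; have := H θ hθ; simpa using this
  have ha : a ≠ 0 := by
    intro h0; exact hab ⟨h0, rfl⟩
  have hcase : n = 1 ∨ n = -1 ∨ 2 ≤ n ∨ n ≤ -2 := by omega
  rcases hcase with rfl | rfl | h2 | h2
  · left
    refine ⟨rfl, ?_⟩
    have := H' (Real.pi / 2) (by rw [Real.sin_pi_div_two]; norm_num)
    rw [Real.sin_pi_div_two] at this
    simp only [Int.cast_one, one_mul] at this
    rw [Real.sin_pi_div_two] at this
    rcases ha.lt_or_gt with h | h
    · nlinarith
    · exact h
  · right
    refine ⟨rfl, ?_⟩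
    have := H' (Real.pi / 2) (by rw [Real.sin_pi_div_two]; norm_num)
    rw [Real.sin_pi_div_two] at this
    have hcast : ((-1 : ℤ) : ℝ) * (Real.pi / 2) = -(Real.pi / 2) := by push_cast; ring
    rw [hcast, Real.sin_neg, Real.sin_pi_div_two] at this
    rcases ha.lt_or_gt with h | h
    · exact h
    · nlinarith
  · exfalso; exact ha (trig_aux h2 H')
  · exfalso
    have H2 : ∀ θ : ℝ, Real.sin θ ≠ 0 →
        0 ≤ Real.sin θ * (-a * Real.sin (((-n : ℤ) : ℝ) * θ)) := by
      intro θ hθ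
      have hs : Real.sin (-θ) ≠ 0 := by rw [Real.sin_neg]; simpa using hθ
      have h5 := H' (-θ) hs
      have hcast : ((n:ℝ)) * (-θ) = -((n:ℝ) * θ) := by ring
      rw [Real.sin_neg, hcast, Real.sin_neg] at h5
      have hc2 : ((-n : ℤ) : ℝ) * θ = -((n:ℝ) * θ) := by push_cast; ring
      rw [hc2, Real.sin_neg]
      nlinarith
    have h6 := trig_aux (by omega : 2 ≤ -n) H2
    exact ha (by linarith)


/-- Classification of nonzero finite order at a real point. -/
lemma classify_real (hm : MeromorphicOn f univ)
    (Him : ∀ z : ℂ, z.im ≠ 0 → z.im * (f z).im > 0) (x : ℝ) {n : ℤ} (hn : n ≠ 0)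
    (h : (hm x (mem_univ (x:ℂ))).order = n) :
    ∃ G : ℂ → ℂ, AnalyticAt ℂ G x ∧ (G x).im = 0 ∧
      ((n = 1 ∧ 0 < (G (x:ℂ)).re) ∨ (n = -1 ∧ (G (x:ℂ)).re < 0)) ∧
      ∀ᶠ z in 𝓝[≠] (x:ℂ), f z = (z - (x:ℂ)) ^ n • G z := by
  rw [MeromorphicAt.order_eq_int_iff] at h
  obtain ⟨G, hG, hGne, heq⟩ := h
  have key := fun θ hθ => directional_sign Him x n hG.continuousAt heq θ hθ
  set a := (G (x:ℂ)).re with ha_def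
  set b := (G (x:ℂ)).im with hb_def
  have key' : ∀ θ : ℝ, Real.sin θ ≠ 0 →
      0 ≤ Real.sin θ * (a * Real.sin (n * θ) + b * Real.cos (n * θ)) := by
    intro θ hθ
    have h1 := key θ hθ
    have h2 : Complex.exp ((θ:ℂ) * Complex.I) ^ n
        = Complex.exp ((((n : ℝ) * θ : ℝ) : ℂ) * Complex.I) := by
      rw [← Complex.exp_int_mul]
      congr 1
      push_cast
      ring
    rw [h2] at h1
    rw [Complex.mul_im, Complex.exp_ofReal_mul_I_re, Complex.exp_ofReal_mul_I_im] at h1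
    convert h1 using 2
    push_cast
    ring
  have hab : ¬(a = 0 ∧ b = 0) := by
    rintro ⟨h1, h2⟩
    exact hGne (Complex.ext h1 h2)
  obtain ⟨hb, hcase⟩ := trig_classify hn hab key'
  exact ⟨G, hG, hb, by tauto, heq⟩

/-- No zeros off the real axis (open mapping argument). -/
lemma no_nonreal_zero (hm : MeromorphicOn f univ)
    (Him : ∀ z : ℂ, z.im ≠ 0 → z.im * (f z).im > 0) {z₀ : ℂ} (hz : z₀.im ≠ 0)
    {n : ℤ} (hn : 0 < n) (h : (hm z₀ (mem_univ z₀)).order = n) : False := by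
  have hne_top := order_ne_top hm Him z₀
  rw [MeromorphicAt.order_eq_int_iff] at h
  obtain ⟨G, hG, hGne, heq⟩ := h
  set m := n.toNat with hm'
  have hm0 : 0 < m := by omega
  have hnm : (m : ℤ) = n := Int.toNat_of_nonneg hn.le
  set φ : ℂ → ℂ := fun z => (z - z₀) ^ m * G z with hφ_def
  have hφa : AnalyticAt ℂ φ z₀ := ((analyticAt_id.sub analyticAt_const).pow m).mul hG
  have hφ0 : φ z₀ = 0 := by
    simp [hφ_def, zero_pow hm0.ne']
  have heq' : ∀ᶠ z in 𝓝[≠] z₀, f z = φ z := by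
    filter_upwards [heq] with w hw
    rw [hw, smul_eq_mul, ← hnm, zpow_natCast]
  rcases hφa.eventually_constant_or_nhds_le_map_nhds with hc | hmap
  · apply hne_top
    rw [MeromorphicAt.order_eq_top_iff]
    filter_upwards [heq', hc.filter_mono nhdsWithin_le_nhds] with w h1 h2
    rw [h1, h2, hφ0]
  · have hT : {w : ℂ | 0 < w.im * z₀.im} ∈ 𝓝 z₀ := by
      refine IsOpen.mem_nhds ?_ ?_
      · exact isOpen_lt continuous_const (Complex.continuous_im.mul continuous_const)
      · exact mul_self_pos.mpr hz
    have hA : {z : ℂ | z ≠ z₀ → f z = φ z} ∈ 𝓝 z₀ := by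
      have := eventually_nhdsWithin_iff.mp heq'
      exact this
    have himg : φ '' ({w : ℂ | 0 < w.im * z₀.im} ∩ {z | z ≠ z₀ → f z = φ z}) ∈ 𝓝 (0:ℂ) := by
      have := hmap (image_mem_map (inter_mem hT hA))
      rwa [hφ0] at this
    obtain ⟨ε, hε, hball⟩ := Metric.mem_nhds_iff.mp himg
    set s : ℝ := if 0 < z₀.im then -1 else 1 with hs_def
    set q : ℂ := (s * (ε/2) : ℝ) * Complex.I with hq_def
    have hqim : q.im = s * (ε/2) := by simp [hq_def]
    have hq : q ∈ Metric.ball (0:ℂ) ε := by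
      simp only [Metric.mem_ball, dist_zero_right, hq_def]
      rw [norm_mul, Complex.norm_I, mul_one, Complex.norm_real]
      have : |s| = 1 := by rcases ite_eq_or_eq (0 < z₀.im) (-1:ℝ) 1 with h | h <;>
        rw [hs_def, h] <;> norm_num
      rw [Real.norm_eq_abs, abs_mul, this, one_mul, abs_of_pos (by linarith)]
      linarith
    obtain ⟨w, hwmem, hwq⟩ := hball hq
    obtain ⟨hwT, hwA⟩ := hwmem
    simp only [mem_setOf_eq] at hwT hwA
    have hq0 : q.im * z₀.im < 0 := by
      rw [hqim, hs_def]
      rcases lt_trichotomy z₀.im 0 with h0 | h0 | h0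
      · rw [if_neg (by linarith)]; nlinarith
      · exact absurd h0 hz
      · rw [if_pos h0]; nlinarith
    have hwz : w ≠ z₀ := by
      intro hzz
      rw [hzz, hφ0] at hwq
      rw [← hwq] at hq0
      simp at hq0
    have hfw : f w = q := by rw [hwA hwz, hwq]
    have hwim : w.im ≠ 0 := by
      intro h0; rw [h0] at hwT; simp at hwT
    have hbad := Him w hwim
    rw [hfw] at hbad
    nlinarith [mul_pos hwT hbad, sq_nonneg w.im]

/-- Off the real axis the order is zero. -/
lemma nonreal_order_zero (hm : MeromorphicOn f univ)
    (Him : ∀ z : ℂ, z.im ≠ 0 → z.im * (f z).im > 0) {z : ℂ} (hz : z.im ≠ 0) :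
    (hm z (mem_univ z)).order = ((0 : ℤ) : WithTop ℤ) := by
  obtain ⟨k, hk⟩ := WithTop.ne_top_iff_exists.mp (order_ne_top hm Him z)
  rcases lt_trichotomy k 0 with h0 | h0 | h0
  · exfalso
    have hdual := dual_order hm hk.symm
    exact no_nonreal_zero (dual_mero hm) (dual_Him Him) hz (by omega : 0 < -k) hdual
  · rw [← hk, h0]
  · exact absurd hk.symm (fun h => no_nonreal_zero hm Him hz h0 h)


/-- Main sign-change lemma: two poles with only order-zero points in between is impossible. -/
lemma interval_contradiction (hm : MeromorphicOn f univ)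
    (Him : ∀ z : ℂ, z.im ≠ 0 → z.im * (f z).im > 0) {x y : ℝ} (hxy : x < y)
    (hx : (hm x (mem_univ (x:ℂ))).order < 0) (hy : (hm y (mem_univ (y:ℂ))).order < 0)
    (hzero : ∀ t : ℝ, x < t → t < y →
      (hm t (mem_univ (t:ℂ))).order = ((0 : ℤ) : WithTop ℤ)) : False := by
  -- endpoint classification
  obtain ⟨nx, hnx⟩ := WithTop.ne_top_iff_exists.mp (order_ne_top hm Him (x:ℂ))
  obtain ⟨ny, hny⟩ := WithTop.ne_top_iff_exists.mp (order_ne_top hm Him (y:ℂ))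
  have hnx0 : nx < 0 := by rw [← hnx] at hx; exact_mod_cast hx
  have hny0 : ny < 0 := by rw [← hny] at hy; exact_mod_cast hy
  obtain ⟨Gx, hGx, hGxim, hGxcase, heqx⟩ :=
    classify_real hm Him x (by omega : nx ≠ 0) hnx.symm
  obtain ⟨Gy, hGy, hGyim, hGycase, heqy⟩ :=
    classify_real hm Him y (by omega : ny ≠ 0) hny.symm
  have hGxneg : (Gx (x:ℂ)).re < 0 := by
    rcases hGxcase with ⟨h1, _⟩ | ⟨_, h2⟩
    · omega
    · exact h2
  have hGyneg : (Gy (y:ℂ)).re < 0 := by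
    rcases hGycase with ⟨h1, _⟩ | ⟨_, h2⟩
    · omega
    · exact h2
  have hnxm1 : nx = -1 := by rcases hGxcase with ⟨h1, _⟩ | ⟨h1, _⟩ <;> omega
  have hnym1 : ny = -1 := by rcases hGycase with ⟨h1, _⟩ | ⟨h1, _⟩ <;> omega
  rw [hnxm1] at heqx
  rw [hnym1] at heqy
  -- the sign predicates
  set P : ℝ → Prop := fun t => ∃ G : ℂ → ℂ, AnalyticAt ℂ G (t:ℂ) ∧
    (∀ᶠ z in 𝓝[≠] ((t:ℝ):ℂ), f z = G z) ∧ 0 < (G (t:ℂ)).re with hP_def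
  set N : ℝ → Prop := fun t => ∃ G : ℂ → ℂ, AnalyticAt ℂ G (t:ℂ) ∧
    (∀ᶠ z in 𝓝[≠] ((t:ℝ):ℂ), f z = G z) ∧ (G (t:ℂ)).re < 0 with hN_def
  have hdisj : ∀ t : ℝ, P t → N t → False := by
    rintro t ⟨G, hG, eG, pG⟩ ⟨H, hH, eH, pH⟩
    have hval : G (t:ℂ) = H (t:ℂ) := by
      refine ext_val_eq hG.continuousAt hH.continuousAt ?_
      filter_upwards [eG, eH] with z h1 h2
      rw [← h1, h2]
    rw [hval] at pG
    linarith
  have hcover : ∀ t : ℝ, x < t → t < y → P t ∨ N t := by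
    intro t h1 h2
    have h0 := hzero t h1 h2
    rw [MeromorphicAt.order_eq_int_iff] at h0
    obtain ⟨G, hG, hGne, heqG⟩ := h0
    have heqG' : ∀ᶠ z in 𝓝[≠] ((t:ℝ):ℂ), f z = G z := by
      filter_upwards [heqG] with z hz
      simpa using hz
    have hrealG : (G (t:ℂ)).im = 0 := extension_im_eq_zero Him t hG.continuousAt heqG'
    rcases lt_trichotomy ((G (t:ℂ)).re) 0 with hh | hh | hh
    · exact Or.inr ⟨G, hG, heqG', hh⟩
    · exact absurd (Complex.ext hh hrealG) hGne
    · exact Or.inl ⟨G, hG, heqG', hh⟩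
  have hPopen : IsOpen {t : ℝ | P t} := by
    rw [isOpen_iff_eventually]
    rintro t ⟨G, hG, eG, pG⟩
    have h1 := extension_transfer (g := G) eG
    have h2 : ∀ᶠ s : ℂ in 𝓝 ((t:ℝ):ℂ), 0 < (G s).re := by
      have hc : Tendsto (fun s : ℂ => (G s).re) (𝓝 (t:ℂ)) (𝓝 ((G (t:ℂ)).re)) :=
        (Complex.continuous_re.tendsto _).comp hG.continuousAt
      exact hc.eventually_const_lt pG
    have h3 : ∀ᶠ s : ℂ in 𝓝 ((t:ℝ):ℂ), AnalyticAt ℂ G s := hG.eventually_analyticAt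
    have h4 := (Complex.continuous_ofReal.tendsto t).eventually ((h1.and h2).and h3)
    filter_upwards [h4] with s ⟨⟨e1, e2⟩, e3⟩
    exact ⟨G, e3, e1, e2⟩
  have hNopen : IsOpen {t : ℝ | N t} := by
    rw [isOpen_iff_eventually]
    rintro t ⟨G, hG, eG, pG⟩
    have h1 := extension_transfer (g := G) eG
    have h2 : ∀ᶠ s : ℂ in 𝓝 ((t:ℝ):ℂ), (G s).re < 0 := by
      have hc : Tendsto (fun s : ℂ => (G s).re) (𝓝 (t:ℂ)) (𝓝 ((G (t:ℂ)).re)) :=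
        (Complex.continuous_re.tendsto _).comp hG.continuousAt
      exact hc.eventually_lt_const pG
    have h3 : ∀ᶠ s : ℂ in 𝓝 ((t:ℝ):ℂ), AnalyticAt ℂ G s := hG.eventually_analyticAt
    have h4 := (Complex.continuous_ofReal.tendsto t).eventually ((h1.and h2).and h3)
    filter_upwards [h4] with s ⟨⟨e1, e2⟩, e3⟩
    exact ⟨G, e3, e1, e2⟩
  -- a negative point just right of x
  have hNnear : ∃ t : ℝ, t ∈ Ioo x y ∧ N t := by
    have h1 := extension_transfer (g := fun z => (z - (x:ℂ)) ^ (-1 : ℤ) • Gx z) heqx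
    have h2 : ∀ᶠ s : ℂ in 𝓝 ((x:ℝ):ℂ), (Gx s).re < 0 := by
      have hc : Tendsto (fun s : ℂ => (Gx s).re) (𝓝 (x:ℂ)) (𝓝 ((Gx (x:ℂ)).re)) :=
        (Complex.continuous_re.tendsto _).comp hGx.continuousAt
      exact hc.eventually_lt_const hGxneg
    have h3 : ∀ᶠ s : ℂ in 𝓝 ((x:ℝ):ℂ), AnalyticAt ℂ Gx s := hGx.eventually_analyticAt
    have h4 := (Complex.continuous_ofReal.tendsto x).eventually ((h1.and h2).and h3)
    have h5 := h4.filter_mono (nhdsWithin_le_nhds (s := Ioi x))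
    have h6 : ∀ᶠ s : ℝ in 𝓝[>] x, s < y :=
      Filter.Eventually.filter_mono (nhdsWithin_le_nhds (s := Ioi x)) (eventually_lt_nhds hxy)
    obtain ⟨t, ⟨⟨⟨e1, e2⟩, e3⟩, hty⟩, htx⟩ := ((h5.and h6).and self_mem_nhdsWithin).exists
    have htx' : x < t := htx
    have hne : (t:ℂ) ≠ (x:ℂ) := by
      simp only [ne_eq, Complex.ofReal_inj]
      exact (ne_of_gt htx')
    refine ⟨t, ⟨htx', hty⟩, fun z => (z - (x:ℂ)) ^ (-1 : ℤ) • Gx z, ?_, e1, ?_⟩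
    · have ha := (analyticAt_zpow hne (-1)).smul e3
      exact ha
    · have hcast : ((t:ℂ) - (x:ℂ)) = ((t - x : ℝ) : ℂ) := by push_cast; ring
      show ((((t:ℂ) - (x:ℂ)) ^ (-1 : ℤ)) • Gx (t:ℂ)).re < 0
      rw [smul_eq_mul, hcast, ← Complex.ofReal_zpow, Complex.re_ofReal_mul]
      have hpos : (0:ℝ) < (t - x) ^ (-1 : ℤ) := by
        rw [zpow_neg_one]
        exact inv_pos.mpr (by linarith)
      exact mul_neg_of_pos_of_neg hpos e2
  -- a positive point just left of y
  have hPnear : ∃ t : ℝ, t ∈ Ioo x y ∧ P t := by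
    have h1 := extension_transfer (g := fun z => (z - (y:ℂ)) ^ (-1 : ℤ) • Gy z) heqy
    have h2 : ∀ᶠ s : ℂ in 𝓝 ((y:ℝ):ℂ), (Gy s).re < 0 := by
      have hc : Tendsto (fun s : ℂ => (Gy s).re) (𝓝 (y:ℂ)) (𝓝 ((Gy (y:ℂ)).re)) :=
        (Complex.continuous_re.tendsto _).comp hGy.continuousAt
      exact hc.eventually_lt_const hGyneg
    have h3 : ∀ᶠ s : ℂ in 𝓝 ((y:ℝ):ℂ), AnalyticAt ℂ Gy s := hGy.eventually_analyticAt
    have h4 := (Complex.continuous_ofReal.tendsto y).eventually ((h1.and h2).and h3)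
    have h5 := h4.filter_mono (nhdsWithin_le_nhds (s := Iio y))
    have h6 : ∀ᶠ s : ℝ in 𝓝[<] y, x < s :=
      Filter.Eventually.filter_mono (nhdsWithin_le_nhds (s := Iio y)) (eventually_gt_nhds hxy)
    obtain ⟨t, ⟨⟨⟨e1, e2⟩, e3⟩, hty⟩, htx⟩ := ((h5.and h6).and self_mem_nhdsWithin).exists
    have htx' : t < y := htx
    have hne : (t:ℂ) ≠ (y:ℂ) := by
      simp only [ne_eq, Complex.ofReal_inj]
      exact (ne_of_lt htx')
    refine ⟨t, ⟨hty, htx'⟩, fun z => (z - (y:ℂ)) ^ (-1 : ℤ) • Gy z, ?_, e1, ?_⟩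
    · exact (analyticAt_zpow hne (-1)).smul e3
    · have hcast : ((t:ℂ) - (y:ℂ)) = ((t - y : ℝ) : ℂ) := by push_cast; ring
      show 0 < ((((t:ℂ) - (y:ℂ)) ^ (-1 : ℤ)) • Gy (t:ℂ)).re
      rw [smul_eq_mul, hcast, ← Complex.ofReal_zpow, Complex.re_ofReal_mul]
      have hneg : (t - y) ^ (-1 : ℤ) < 0 := by
        rw [zpow_neg_one]
        exact inv_neg''.mpr (by linarith)
      exact mul_pos_of_neg_of_neg hneg e2
  obtain ⟨tN, htN1, htN2⟩ := hNnear
  obtain ⟨tP, htP1, htP2⟩ := hPnear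
  obtain ⟨t, htIoo, htP, htN⟩ := isPreconnected_Ioo (a := x) (b := y) {t : ℝ | P t}
    {t : ℝ | N t} hPopen hNopen
    (fun t ht => by rcases hcover t ht.1 ht.2 with h | h; exacts [Or.inl h, Or.inr h])
    ⟨tP, htP1, htP2⟩ ⟨tN, htN1, htN2⟩
  exact hdisj t htP htN


lemma order_point_congr (hm : MeromorphicOn f univ) {z w : ℂ} (h : z = w) :
    (hm z (mem_univ z)).order = (hm w (mem_univ w)).order := by subst h; rfl

/-- Points of nonzero order are isolated. -/
lemma isolated_nonzero (hm : MeromorphicOn f univ)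
    (Him : ∀ z : ℂ, z.im ≠ 0 → z.im * (f z).im > 0) (t : ℝ) :
    ∃ ε > 0, ∀ s : ℝ, s ≠ t → |s - t| < ε →
      (hm s (mem_univ (s:ℂ))).order = ((0 : ℤ) : WithTop ℤ) := by
  obtain ⟨k, hk⟩ := WithTop.ne_top_iff_exists.mp (order_ne_top hm Him (t:ℂ))
  have hk' := hk.symm
  rw [MeromorphicAt.order_eq_int_iff] at hk'
  obtain ⟨G, hG, hGne, heqG⟩ := hk'
  have h1 := extension_transfer (g := fun z => (z - (t:ℂ)) ^ k • G z) heqG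
  have h2 : ∀ᶠ s : ℂ in 𝓝 ((t:ℝ):ℂ), G s ≠ 0 := hG.continuousAt.eventually_ne hGne
  have h3 : ∀ᶠ s : ℂ in 𝓝 ((t:ℝ):ℂ), AnalyticAt ℂ G s := hG.eventually_analyticAt
  have h4 := (Complex.continuous_ofReal.tendsto t).eventually ((h1.and h2).and h3)
  rw [Metric.eventually_nhds_iff] at h4
  obtain ⟨ε, hε, hball⟩ := h4
  refine ⟨ε, hε, ?_⟩
  intro s hst hdist
  obtain ⟨⟨e1, e2⟩, e3⟩ := hball (show dist s t < ε by rwa [Real.dist_eq])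
  have hne : (s:ℂ) ≠ (t:ℂ) := by
    simp only [ne_eq, Complex.ofReal_inj]; exact hst
  rw [MeromorphicAt.order_eq_int_iff]
  refine ⟨fun z => (z - (t:ℂ)) ^ k • G z, (analyticAt_zpow hne k).smul e3, ?_, ?_⟩
  · show ((s:ℂ) - (t:ℂ)) ^ k • G (s:ℂ) ≠ 0
    rw [smul_eq_mul]
    exact mul_ne_zero (zpow_ne_zero k (sub_ne_zero.mpr hne)) e2
  · filter_upwards [e1] with z hz
    simpa using hz

/-- Existence of a zero between consecutive poles. -/
lemma exists_zero_between (hm : MeromorphicOn f univ)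
    (Him : ∀ z : ℂ, z.im ≠ 0 → z.im * (f z).im > 0) {x y : ℝ} (hxy : x < y)
    (hx : (hm x (mem_univ (x:ℂ))).order < 0) (hy : (hm y (mem_univ (y:ℂ))).order < 0)
    (hno : ∀ t : ℝ, x < t → t < y → ¬((hm t (mem_univ (t:ℂ))).order < 0)) :
    ∃ t : ℝ, x < t ∧ t < y ∧ 0 < (hm t (mem_univ (t:ℂ))).order := by
  by_contra h
  push_neg at h
  apply interval_contradiction hm Him hxy hx hy
  intro t h1 h2
  obtain ⟨k, hk⟩ := WithTop.ne_top_iff_exists.mp (order_ne_top hm Him (t:ℂ))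
  have hk1 : ¬(k < 0) := by
    intro hlt
    exact hno t h1 h2 (by rw [← hk]; exact_mod_cast hlt)
  have hk2 : ¬(0 < k) := by
    intro hlt
    have := h t h1 h2
    rw [← hk] at this
    exact absurd (by exact_mod_cast hlt) this.not_gt
  have : k = 0 := by omega
  rw [← hk, this]

/-- orders of the dual function. -/
lemma dual_order' (hm : MeromorphicOn f univ)
    (Him : ∀ z : ℂ, z.im ≠ 0 → z.im * (f z).im > 0) (z : ℂ) :
    ∃ k : ℤ, (hm z (mem_univ z)).order = (k : WithTop ℤ) ∧
      ((dual_mero hm) z (mem_univ z)).order = ((-k : ℤ) : WithTop ℤ) := by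
  obtain ⟨k, hk⟩ := WithTop.ne_top_iff_exists.mp (order_ne_top hm Him z)
  exact ⟨k, hk.symm, dual_order hm hk.symm⟩

/-- No two zeros of `f` between consecutive poles (uses the dual function). -/
lemma no_two_zeros (hm : MeromorphicOn f univ)
    (Him : ∀ z : ℂ, z.im ≠ 0 → z.im * (f z).im > 0) {x y t₁ t₂ : ℝ}
    (hxt1 : x < t₁) (ht12 : t₁ < t₂) (ht2y : t₂ < y)
    (hno : ∀ t : ℝ, x < t → t < y → ¬((hm t (mem_univ (t:ℂ))).order < 0))
    (hz1 : 0 < (hm t₁ (mem_univ (t₁:ℂ))).order)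
    (hz2 : 0 < (hm t₂ (mem_univ (t₂:ℂ))).order) : False := by
  classical
  set S : Set ℝ := {s : ℝ | t₁ < s ∧ s ≤ t₂ ∧ 0 < (hm s (mem_univ (s:ℂ))).order} with hS_def
  have ht2S : t₂ ∈ S := ⟨ht12, le_refl _, hz2⟩
  have hSne : S.Nonempty := ⟨t₂, ht2S⟩
  have hbdd : BddBelow S := ⟨t₁, fun s hs => hs.1.le⟩
  set m := sInf S with hm_def
  have hmle : m ≤ t₂ := csInf_le hbdd ht2S
  have hmge : t₁ ≤ m := le_csInf hSne (fun s hs => hs.1.le)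
  have hmem : m ∈ S := by
    by_contra hmem
    obtain ⟨ε, hε, hiso⟩ := isolated_nonzero hm Him m
    obtain ⟨s, hsS, hslt⟩ := exists_lt_of_csInf_lt hSne (lt_add_of_pos_right m hε)
    have hms : m ≤ s := csInf_le hbdd hsS
    have hsne : s ≠ m := fun h => hmem (h ▸ hsS)
    have h0 := hiso s hsne (by rw [_root_.abs_of_nonneg (by linarith : (0:ℝ) ≤ s - m)]; linarith)
    have := hsS.2.2
    rw [h0] at this
    exact absurd this (by exact_mod_cast lt_irrefl (0:ℤ))
  have ht1m : t₁ < m := hmem.1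
  -- apply the sign-change lemma to the dual function on (t₁, m)
  have g_mero := dual_mero hm
  have g_Him := dual_Him Him
  obtain ⟨k1, hk1, hk1'⟩ := dual_order' hm Him (t₁ : ℂ)
  obtain ⟨km, hkm, hkm'⟩ := dual_order' hm Him (m : ℂ)
  have hk1pos : 0 < k1 := by
    rw [hk1] at hz1; exact_mod_cast hz1
  have hkmpos : 0 < km := by
    have := hmem.2.2
    rw [hkm] at this; exact_mod_cast this
  have hgx : ((dual_mero hm) t₁ (mem_univ ((t₁:ℝ):ℂ))).order < 0 := by
    rw [hk1']; exact_mod_cast (by omega : -k1 < 0)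
  have hgy : ((dual_mero hm) m (mem_univ ((m:ℝ):ℂ))).order < 0 := by
    rw [hkm']; exact_mod_cast (by omega : -km < 0)
  have hgno : ∀ s : ℝ, t₁ < s → s < m →
      ¬(((dual_mero hm) s (mem_univ ((s:ℝ):ℂ))).order < 0) := by
    intro s h1 h2 hlt
    obtain ⟨j, hj, hj'⟩ := dual_order' hm Him (s : ℂ)
    rw [hj'] at hlt
    have hjpos : 0 < j := by
      have : -j < 0 := by exact_mod_cast hlt
      omega
    -- then s is a zero of f in (t₁, m), contradicting minimality of m
    have hsS : s ∈ S := ⟨h1, by linarith, by rw [hj]; exact_mod_cast hjpos⟩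
    exact absurd (csInf_le hbdd hsS) (not_le.mpr h2)
  obtain ⟨s, hs1, hs2, hs3⟩ := exists_zero_between g_mero g_Him ht1m hgx hgy hgno
  -- s is then a pole of f inside (x, y)
  obtain ⟨j, hj, hj'⟩ := dual_order' hm Him (s : ℂ)
  rw [hj'] at hs3
  have hjneg : j < 0 := by
    have : 0 < -j := by exact_mod_cast hs3
    omega
  refine hno s (by linarith) (by linarith) ?_
  rw [hj]
  exact_mod_cast hjneg

/-- Between consecutive poles there is exactly one zero. -/
lemma exists_unique_zero (hm : MeromorphicOn f univ)
    (Him : ∀ z : ℂ, z.im ≠ 0 → z.im * (f z).im > 0) {x y : ℝ} (hxy : x < y)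
    (hx : (hm x (mem_univ (x:ℂ))).order < 0) (hy : (hm y (mem_univ (y:ℂ))).order < 0)
    (hno : ∀ t : ℝ, x < t → t < y → ¬((hm t (mem_univ (t:ℂ))).order < 0)) :
    ∃! t : ℝ, x < t ∧ t < y ∧
      (0 < (hm t (mem_univ (t:ℂ))).order ∧ (hm t (mem_univ (t:ℂ))).order ≠ ⊤) := by
  obtain ⟨t, ht1, ht2, ht3⟩ := exists_zero_between hm Him hxy hx hy hno
  refine ⟨t, ⟨ht1, ht2, ht3, order_ne_top hm Him _⟩, ?_⟩
  rintro t' ⟨h1, h2, h3, _⟩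
  by_contra hne
  rcases lt_or_gt_of_ne hne with hlt | hlt
  · exact no_two_zeros hm Him h1 hlt ht2 hno h3 ht3
  · exact no_two_zeros hm Him ht1 hlt h2 hno ht3 h3


lemma pole_real_simple (hm : MeromorphicOn f univ)
    (Him : ∀ z : ℂ, z.im ≠ 0 → z.im * (f z).im > 0) {z : ℂ}
    (hp : (hm z (mem_univ z)).order < 0) :
    z.im = 0 ∧ (hm z (mem_univ z)).order = ((-1 : ℤ) : WithTop ℤ) := by
  have him : z.im = 0 := by
    by_contra him
    rw [nonreal_order_zero hm Him him] at hp
    exact absurd hp (by exact_mod_cast lt_irrefl (0:ℤ))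
  refine ⟨him, ?_⟩
  have hz : ((z.re : ℝ) : ℂ) = z := Complex.ext (by simp) (by simp [him])
  obtain ⟨k, hk⟩ := WithTop.ne_top_iff_exists.mp (order_ne_top hm Him z)
  have hkneg : k < 0 := by rw [← hk] at hp; exact_mod_cast hp
  obtain ⟨G, _, _, hcase, _⟩ := classify_real hm Him z.re (by omega : k ≠ 0)
    (by rw [order_point_congr hm hz]; exact hk.symm)
  have hk1 : k = -1 := by rcases hcase with ⟨h1, _⟩ | ⟨h1, _⟩ <;> omega
  rw [← hk, hk1]

lemma zero_real_simple (hm : MeromorphicOn f univ)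
    (Him : ∀ z : ℂ, z.im ≠ 0 → z.im * (f z).im > 0) {z : ℂ}
    (hp : 0 < (hm z (mem_univ z)).order) :
    z.im = 0 ∧ (hm z (mem_univ z)).order = ((1 : ℤ) : WithTop ℤ) := by
  have him : z.im = 0 := by
    by_contra him
    rw [nonreal_order_zero hm Him him] at hp
    exact absurd hp (by exact_mod_cast lt_irrefl (0:ℤ))
  refine ⟨him, ?_⟩
  have hz : ((z.re : ℝ) : ℂ) = z := Complex.ext (by simp) (by simp [him])
  obtain ⟨k, hk⟩ := WithTop.ne_top_iff_exists.mp (order_ne_top hm Him z)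
  have hkpos : 0 < k := by rw [← hk] at hp; exact_mod_cast hp
  obtain ⟨G, _, _, hcase, _⟩ := classify_real hm Him z.re (by omega : k ≠ 0)
    (by rw [order_point_congr hm hz]; exact hk.symm)
  have hk1 : k = 1 := by rcases hcase with ⟨h1, _⟩ | ⟨h1, _⟩ <;> omega
  rw [← hk, hk1]

end EPN

/-- Essentially positive Nevanlinna function. -/
def EssPosNevanlinna (f : ℂ → ℂ) : Prop :=
  MeromorphicOn f Set.univ ∧
  (∀ z : ℂ, z.im ≠ 0 → z.im * (f z).im > 0) ∧
  ∃ β : ℝ, ∀ x : ℝ, x < β → (f x).im = 0 ∧ 0 < (f x).re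

/-- `f` has a pole at `z` (negative meromorphic order). -/
def IsPole (f : ℂ → ℂ) (hf : MeromorphicOn f Set.univ) (z : ℂ) : Prop :=
  meromorphicOrderAt f z < 0

/-- `f` has a zero at `z` (positive, finite meromorphic order). -/
def IsZeroPt (f : ℂ → ℂ) (hf : MeromorphicOn f Set.univ) (z : ℂ) : Prop :=
  0 < meromorphicOrderAt f z ∧ meromorphicOrderAt f z ≠ ⊤

/-- An essentially positive Nevanlinna function that is not identically constant has only
real simple poles and real simple zeros, and its zeros and poles interlace on the real axis:
strictly between two consecutive poles there is exactly one zero, and strictly between two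
consecutive zeros there is exactly one pole. -/
theorem essPosNevanlinna_zeros_poles_real_simple_interlace
    (f : ℂ → ℂ) (hmer : MeromorphicOn f Set.univ)
    (hf : EssPosNevanlinna f)
    (hnc : ¬ ∃ c : ℂ, ∀ z : ℂ, z.im ≠ 0 → f z = c) :
    -- all poles are real and simple
    (∀ z : ℂ, IsPole f hmer z → z.im = 0 ∧ meromorphicOrderAt f z = (-1 : ℤ)) ∧
    -- all zeros are real and simple
    (∀ z : ℂ, IsZeroPt f hmer z → z.im = 0 ∧ meromorphicOrderAt f z = (1 : ℤ)) ∧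
    -- between consecutive poles there is exactly one zero
    (∀ x y : ℝ, x < y → IsPole f hmer x → IsPole f hmer y →
      (∀ t : ℝ, x < t → t < y → ¬ IsPole f hmer t) →
      ∃! t : ℝ, x < t ∧ t < y ∧ IsZeroPt f hmer t) ∧
    -- between consecutive zeros there is exactly one pole
    (∀ x y : ℝ, x < y → IsZeroPt f hmer x → IsZeroPt f hmer y →
      (∀ t : ℝ, x < t → t < y → ¬ IsZeroPt f hmer t) →
      ∃! t : ℝ, x < t ∧ t < y ∧ IsPole f hmer t) := by
  obtain ⟨-, Him, -⟩ := hf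
  refine ⟨?_, ?_, ?_, ?_⟩
  · intro z hpz
    exact EPN.pole_real_simple hmer Him hpz
  · intro z hzz
    exact EPN.zero_real_simple hmer Him hzz.1
  · intro x y hxy hpx hpy hnop
    exact EPN.exists_unique_zero hmer Him hxy hpx hpy hnop
  · intro x y hxy hz1 hz2 hnoz
    have g_mero := EPN.dual_mero hmer
    have g_Him := EPN.dual_Him Him
    obtain ⟨kx, hkx, hkx'⟩ := EPN.dual_order' hmer Him (x : ℂ)
    obtain ⟨ky, hky, hky'⟩ := EPN.dual_order' hmer Him (y : ℂ)
    have hkxpos : 0 < kx := by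
      have : 0 < (hmer x (Set.mem_univ _)).order := hz1.1; rw [hkx] at this; exact_mod_cast this
    have hkypos : 0 < ky := by
      have : 0 < (hmer y (Set.mem_univ _)).order := hz2.1; rw [hky] at this; exact_mod_cast this
    have hgx : (g_mero x (Set.mem_univ ((x:ℝ):ℂ))).order < 0 := by
      rw [hkx']; exact_mod_cast (by omega : -kx < 0)
    have hgy : (g_mero y (Set.mem_univ ((y:ℝ):ℂ))).order < 0 := by
      rw [hky']; exact_mod_cast (by omega : -ky < 0)
    have hgno : ∀ t : ℝ, x < t → t < y →
        ¬((g_mero t (Set.mem_univ ((t:ℝ):ℂ))).order < 0) := by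
      intro t h1 h2 hlt
      obtain ⟨j, hj, hj'⟩ := EPN.dual_order' hmer Him (t : ℂ)
      rw [hj'] at hlt
      have hjpos : 0 < j := by
        have : -j < 0 := by exact_mod_cast hlt
        omega
      exact hnoz t h1 h2 ⟨by show 0 < (hmer t (Set.mem_univ _)).order; rw [hj]; exact_mod_cast hjpos,
        EPN.order_ne_top hmer Him _⟩
    obtain ⟨t, ⟨h1, h2, h3, -⟩, huniq⟩ :=
      EPN.exists_unique_zero g_mero g_Him hxy hgx hgy hgno
    obtain ⟨j, hj, hj'⟩ := EPN.dual_order' hmer Him (t : ℂ)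
    rw [hj'] at h3
    have hjneg : j < 0 := by
      have : 0 < -j := by exact_mod_cast h3
      omega
    refine ⟨t, ⟨h1, h2, by show (hmer t (Set.mem_univ _)).order < 0; rw [hj]; exact_mod_cast hjneg⟩, ?_⟩
    rintro t' ⟨h1', h2', hp'⟩
    obtain ⟨j', hj2, hj2'⟩ := EPN.dual_order' hmer Him (t' : ℂ)
    have hj'neg : j' < 0 := by
      have : (hmer t' (Set.mem_univ _)).order < 0 := hp'; rw [hj2] at this; exact_mod_cast this
    refine huniq t' ⟨h1', h2', ?_, EPN.order_ne_top g_mero g_Him _⟩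
    rw [hj2']
    exact_mod_cast (by omega : (0:ℤ) < -j')
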